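/- Let A' ⊆ B = {1,...,n₁} × ... × {1,...,n_k} ⊆ ℤ^k. Then d_k(A') ≤ 2^k·|co(A') \ A'| + 2^{k+2}k(k+1)·(min_i n_i)^{-1}·|B|, where d_k(A') = |A' + A'| − 2^k|A'| and co(A') is the set of lattice points in the convex hull of A'. -/

import Mathlib

open Finset Pointwise

namespace DLCD

/-- An order-convex finite set of integers has at most `2·(#evens) + 1` elements. -/
lemma card_le_two_mul_even (T : Finset ℤ)
    (hT : ∀ a ∈ T, ∀ b ∈ T, ∀ c : ℤ, a ≤ c → c ≤ b → c ∈ T) :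
    T.card ≤ 2 * (T.filter (fun t => Even t)).card + 1 := by
  classical
  set E := T.filter (fun t => Even t) with hE
  set S := T.filter (fun t => ¬ Even t) with hS
  have hcard : E.card + S.card = T.card :=
    Finset.card_filter_add_card_filter_not _
  set S' := S.filter (fun t => t + 1 ∈ T) with hS'
  have h1 : S'.card ≤ E.card := by
    apply Finset.card_le_card_of_injOn (fun t => t + 1)
    · intro t ht
      simp only [hS', Finset.coe_filter, Set.mem_setOf_eq, Finset.mem_filter, hS] at ht
      simp only [hE, Finset.coe_filter, Set.mem_setOf_eq, Finset.mem_filter]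
      refine ⟨ht.2, ?_⟩
      have := ht.1.2
      rcases Int.even_or_odd t with h | h
      · exact absurd h this
      · exact h.add_one
    · intro a _ b _ h
      simpa using h
  have h2 : (S \ S').card ≤ 1 := by
    rw [Finset.card_le_one]
    intro a ha b hb
    simp only [hS', Finset.mem_sdiff, Finset.mem_filter, hS] at ha hb
    by_contra hne
    rcases lt_or_gt_of_ne hne with h | h
    · exact ha.2 ⟨ha.1, hT a ha.1.1 b hb.1.1 (a+1) (by omega) (by omega)⟩
    · exact hb.2 ⟨hb.1, hT b hb.1.1 a ha.1.1 (b+1) (by omega) (by omega)⟩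
  have h3 : S.card ≤ S'.card + (S \ S').card := by
    have : S ⊆ S' ∪ (S \ S') := by
      intro x hx
      by_cases h : x ∈ S'
      · exact Finset.mem_union_left _ h
      · exact Finset.mem_union_right _ (Finset.mem_sdiff.mpr ⟨hx, h⟩)
    calc S.card ≤ (S' ∪ (S \ S')).card := Finset.card_le_card this
      _ ≤ S'.card + (S \ S').card := Finset.card_union_le _ _
  omega

/-- Moving a single coordinate within a convex set. -/
lemma update_mem_of_convex {k : ℕ} {K : Set (Fin k → ℝ)} (hK : Convex ℝ K)
    (j : Fin k) {p q : Fin k → ℝ} (hp : p ∈ K) (hq : q ∈ K)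
    (hpq : ∀ i, i ≠ j → p i = q i) {r : ℝ} (h1 : p j ≤ r) (h2 : r ≤ q j) :
    Function.update p j r ∈ K := by
  rcases eq_or_lt_of_le (le_trans h1 h2) with h | h
  · have hr : r = p j := le_antisymm (h ▸ h2) h1
    have : Function.update p j r = p := by
      funext i
      by_cases hi : i = j
      · subst hi; simp [hr]
      · simp [Function.update_of_ne hi]
    rw [this]; exact hp
  · set lam : ℝ := (r - p j) / (q j - p j) with hlam
    have hd : 0 < q j - p j := by linarith
    have h0 : 0 ≤ lam := div_nonneg (by linarith) (by linarith)
    have h1' : lam ≤ 1 := by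
      rw [hlam, div_le_one hd]; linarith
    have hmem := hK hp hq (by linarith : (0:ℝ) ≤ 1 - lam) h0 (by ring)
    have : Function.update p j r = (1 - lam) • p + lam • q := by
      funext i
      by_cases hi : i = j
      · subst hi
        simp only [Function.update_self, Pi.add_apply, Pi.smul_apply, smul_eq_mul]
        rw [hlam]
        field_simp
        ring
      · simp [Function.update_of_ne hi, hpq i hi]
        ring
    rw [this]; exact hmem


variable {k : ℕ} (n : Fin k → ℕ) (K : Set (Fin k → ℝ))

/-- Mixed-scale embedding: coordinates `< j` at integer scale, the rest at half scale. -/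
noncomputable def mixed (j : ℕ) (x : Fin k → ℤ) : Fin k → ℝ :=
  fun i => if (i : ℕ) < j then (x i : ℝ) else (x i : ℝ) / 2

/-- Lattice points of `K` at mixed scale `j`. -/
noncomputable def D (j : ℕ) : Finset (Fin k → ℤ) :=
  @Finset.filter _ (fun x => mixed j x ∈ K) (Classical.decPred _)
    (Fintype.piFinset fun (i : Fin k) => Finset.Icc (if (i : ℕ) < j then 1 else 2)
      (if (i : ℕ) < j then (n i : ℤ) else 2 * (n i : ℤ)))

lemma mem_D (hKbox : ∀ y ∈ K, ∀ i, 1 ≤ y i ∧ y i ≤ (n i : ℝ))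
    {j : ℕ} {x : Fin k → ℤ} : x ∈ D n K j ↔ mixed j x ∈ K := by
  classical
  constructor
  · exact fun h => (Finset.mem_filter.mp h).2
  · intro h
    rw [D, Finset.mem_filter]
    refine ⟨?_, h⟩
    rw [Fintype.mem_piFinset]
    intro i
    have hb := hKbox _ h i
    rw [Finset.mem_Icc]
    by_cases hij : (i : ℕ) < j
    · simp only [hij, if_true]
      rw [mixed] at hb
      simp only [hij, if_true] at hb
      constructor
      · exact_mod_cast hb.1
      · exact_mod_cast hb.2
    · simp only [hij, if_false]
      rw [mixed] at hb
      simp only [hij, if_false] at hb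
      constructor
      · have : (2 : ℝ) ≤ x i := by linarith [hb.1]
        exact_mod_cast this
      · have : (x i : ℝ) ≤ 2 * n i := by linarith [hb.2]
        exact_mod_cast this


lemma step (hKbox : ∀ y ∈ K, ∀ i, 1 ≤ y i ∧ y i ≤ (n i : ℝ)) (hKconv : Convex ℝ K)
    {j : ℕ} (hj : j < k) :
    (D n K j).card ≤ 2 * (D n K (j+1)).card
      + ∏ i : Fin k, (if (i : ℕ) = j then 1 else if (i : ℕ) < j then n i else 2 * n i) := by
  classical
  set jf : Fin k := ⟨j, hj⟩ with hjf
  have hjfv : (jf : ℕ) = j := rfl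
  set β : (Fin k → ℤ) → (Fin k → ℤ) := fun x => Function.update x jf 0 with hβ
  set B := (D n K j).image β with hB
  set Dev := (D n K j).filter (fun x => Even (x jf)) with hDevdef
  -- fiberwise decomposition
  have hDcard : (D n K j).card = ∑ b ∈ B, ((D n K j).filter fun x => β x = b).card :=
    Finset.card_eq_sum_card_fiberwise (fun x hx => Finset.mem_image_of_mem _ hx)
  have hDevcard : Dev.card = ∑ b ∈ B, (Dev.filter fun x => β x = b).card :=
    Finset.card_eq_sum_card_fiberwise
      (fun x hx => Finset.mem_image_of_mem _ (Finset.mem_of_mem_filter x hx))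
  -- per-fiber bound
  have hfiber : ∀ b ∈ B, ((D n K j).filter fun x => β x = b).card ≤
      2 * ((Dev.filter fun x => β x = b)).card + 1 := by
    intro b _
    set F := (D n K j).filter (fun x => β x = b) with hF
    have hagree : ∀ x ∈ F, ∀ y ∈ F, ∀ i, i ≠ jf → x i = y i := by
      intro x hx y hy i hi
      have hxb := (Finset.mem_filter.mp hx).2
      have hyb := (Finset.mem_filter.mp hy).2
      have := congrFun (hxb.trans hyb.symm) i
      simpa [hβ, Function.update_of_ne hi] using this
    have hinj : Set.InjOn (fun x => x jf) (F : Set (Fin k → ℤ)) := by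
      intro x hx y hy h
      funext i
      by_cases hi : i = jf
      · subst hi; exact h
      · exact hagree x hx y hy i hi
    set T := F.image (fun x => x jf) with hT
    have hFT : F.card = T.card := (Finset.card_image_of_injOn hinj).symm
    have hTconv : ∀ a ∈ T, ∀ b' ∈ T, ∀ c : ℤ, a ≤ c → c ≤ b' → c ∈ T := by
      intro a ha b' hb' c hac hcb
      obtain ⟨x, hx, rfl⟩ := Finset.mem_image.mp ha
      obtain ⟨y, hy, rfl⟩ := Finset.mem_image.mp hb'
      have hxK : mixed j x ∈ K := (mem_D n K hKbox).mp (Finset.mem_of_mem_filter x hx)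
      have hyK : mixed j y ∈ K := (mem_D n K hKbox).mp (Finset.mem_of_mem_filter y hy)
      have hpq : ∀ i, i ≠ jf → mixed j x i = mixed j y i := by
        intro i hi
        simp only [mixed]
        rw [hagree x hx y hy i hi]
      have hnotlt : ¬ ((jf : ℕ) < j) := by omega
      have hpj : mixed j x jf = (x jf : ℝ) / 2 := by simp [mixed, hnotlt]
      have hqj : mixed j y jf = (y jf : ℝ) / 2 := by simp [mixed, hnotlt]
      have hupdK : Function.update (mixed j x) jf ((c : ℝ) / 2) ∈ K := by
        apply update_mem_of_convex hKconv jf hxK hyK hpq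
        · rw [hpj]
          have : (x jf : ℝ) ≤ (c : ℝ) := by exact_mod_cast hac
          linarith
        · rw [hqj]
          have : (c : ℝ) ≤ (y jf : ℝ) := by exact_mod_cast hcb
          linarith
      have heq : Function.update (mixed j x) jf ((c : ℝ) / 2) = mixed j (Function.update x jf c) := by
        funext i
        by_cases hi : i = jf
        · subst hi
          simp [mixed, hnotlt]
        · simp [Function.update_of_ne hi, mixed]
      have hmem : Function.update x jf c ∈ F := by
        rw [hF, Finset.mem_filter]
        constructor
        · rw [mem_D n K hKbox, ← heq]
          exact hupdK
        · have hbx := (Finset.mem_filter.mp hx).2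
          rw [hβ] at hbx ⊢
          simp only [Function.update_idem]
          exact hbx
      exact Finset.mem_image.mpr ⟨_, hmem, Function.update_self _ _ _⟩
    have hTbound := card_le_two_mul_even T hTconv
    have himg : T.filter (fun t => Even t) = (F.filter (fun x => Even (x jf))).image (fun x => x jf) := by
      rw [hT, Finset.filter_image]
    have hcards : (T.filter (fun t => Even t)).card = (F.filter (fun x => Even (x jf))).card := by
      rw [himg]
      exact Finset.card_image_of_injOn (hinj.mono (Finset.filter_subset _ _))
    have hDevF : Dev.filter (fun x => β x = b) = F.filter (fun x => Even (x jf)) := by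
      ext x
      simp only [hDevdef, hF, Finset.mem_filter]
      tauto
    rw [hDevF, ← hcards]
    exact hFT ▸ hTbound
  -- sum up
  have hsum1 : (D n K j).card ≤ 2 * Dev.card + B.card := by
    rw [hDcard, hDevcard, Finset.mul_sum]
    calc ∑ b ∈ B, ((D n K j).filter fun x => β x = b).card
        ≤ ∑ b ∈ B, (2 * ((Dev.filter fun x => β x = b)).card + 1) :=
          Finset.sum_le_sum hfiber
      _ = ∑ b ∈ B, 2 * ((Dev.filter fun x => β x = b)).card + B.card := by
          rw [Finset.sum_add_distrib, Finset.sum_const, smul_eq_mul, mul_one]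
  -- evens inject into the finer lattice
  have hDev2 : Dev.card ≤ (D n K (j+1)).card := by
    apply Finset.card_le_card_of_injOn (fun x => Function.update x jf (x jf / 2))
    · intro x hx
      obtain ⟨hxD, hxe⟩ := Finset.mem_filter.mp hx
      obtain ⟨m, hm⟩ := hxe
      have hdiv : x jf / 2 = m := by omega
      simp only [Finset.mem_coe]
      rw [mem_D n K hKbox]
      have : mixed (j+1) (Function.update x jf (x jf / 2)) = mixed j x := by
        funext i
        by_cases hi : i = jf
        · subst hi
          have h1 : (jf : ℕ) < j + 1 := by omega
          have h2 : ¬ ((jf : ℕ) < j) := by omega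
          simp only [mixed, h1, h2, if_true, if_false, Function.update_self, hdiv]
          rw [hm]
          push_cast
          ring
        · have hne : (i : ℕ) ≠ j := fun h => hi (Fin.ext h)
          by_cases h2 : (i : ℕ) < j
          · have h3 : (i : ℕ) < j + 1 := by omega
            simp [mixed, h2, h3, Function.update_of_ne hi]
          · have h3 : ¬ ((i : ℕ) < j + 1) := by omega
            simp [mixed, h2, h3, Function.update_of_ne hi]
      rw [this]
      exact (mem_D n K hKbox).mp hxD
    · intro a ha b hb h
      obtain ⟨-, hae⟩ := Finset.mem_filter.mp ha
      obtain ⟨-, hbe⟩ := Finset.mem_filter.mp hb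
      funext i
      by_cases hi : i = jf
      · subst hi
        have h1 := congrFun h jf
        simp only [Function.update_self] at h1
        obtain ⟨ma, hma⟩ := hae
        obtain ⟨mb, hmb⟩ := hbe
        omega
      · have h1 := congrFun h i
        simpa [Function.update_of_ne hi] using h1
  -- count the fibers
  have hBcard : B.card ≤ ∏ i : Fin k, (if (i : ℕ) = j then 1 else if (i : ℕ) < j then n i else 2 * n i) := by
    have hsub : B ⊆ Fintype.piFinset fun (i : Fin k) =>
        if i = jf then ({0} : Finset ℤ) else Finset.Icc (if (i : ℕ) < j then 1 else 2)
          (if (i : ℕ) < j then (n i : ℤ) else 2 * (n i : ℤ)) := by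
      intro b hb
      obtain ⟨x, hx, rfl⟩ := Finset.mem_image.mp hb
      rw [Fintype.mem_piFinset]
      intro i
      by_cases hi : i = jf
      · subst hi
        simp [hβ]
      · have hx1 := (Finset.mem_filter.mp hx).1
        rw [Fintype.mem_piFinset] at hx1
        simp only [hi, if_false]
        rw [hβ]
        simp only [Function.update_of_ne hi]
        exact hx1 i
    calc B.card ≤ _ := Finset.card_le_card hsub
      _ = ∏ i : Fin k, (if i = jf then ({0} : Finset ℤ) else Finset.Icc (if (i : ℕ) < j then 1 else 2)
          (if (i : ℕ) < j then (n i : ℤ) else 2 * (n i : ℤ))).card := Fintype.card_piFinset _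
      _ ≤ _ := by
        apply Finset.prod_le_prod'
        intro i _
        by_cases hi : i = jf
        · subst hi
          simp [hjfv]
        · have hne : (i : ℕ) ≠ j := fun h => hi (Fin.ext h)
          simp only [hi, if_false, hne]
          by_cases h2 : (i : ℕ) < j
          · simp only [h2, if_true, Int.card_Icc]
            omega
          · simp only [h2, if_false, Int.card_Icc]
            omega
  omega


lemma unroll (hKbox : ∀ y ∈ K, ∀ i, 1 ≤ y i ∧ y i ≤ (n i : ℝ)) (hKconv : Convex ℝ K)
    (j : ℕ) (hjk : j ≤ k) :
    (D n K 0).card ≤ 2 ^ j * (D n K j).card +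
      ∑ m ∈ Finset.range j,
        2 ^ m * ∏ i : Fin k, (if (i : ℕ) = m then 1 else if (i : ℕ) < m then n i else 2 * n i) := by
  induction j with
  | zero => simp
  | succ j ih =>
    have hj : j < k := hjk
    have h1 := ih (le_of_lt hj)
    have h2 := step n K hKbox hKconv hj
    have h3 : 2 ^ j * (D n K j).card ≤ 2 ^ j * (2 * (D n K (j+1)).card
        + ∏ i : Fin k, (if (i : ℕ) = j then 1 else if (i : ℕ) < j then n i else 2 * n i)) :=
      Nat.mul_le_mul_left _ h2
    have h4 : 2 ^ j * (2 * (D n K (j+1)).card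
        + ∏ i : Fin k, (if (i : ℕ) = j then 1 else if (i : ℕ) < j then n i else 2 * n i))
        = 2 ^ (j+1) * (D n K (j+1)).card
          + 2 ^ j * ∏ i : Fin k, (if (i : ℕ) = j then 1 else if (i : ℕ) < j then n i else 2 * n i) := by
      ring
    rw [Finset.sum_range_succ]
    omega

lemma twopow_E {m : ℕ} (hm : m < k) :
    2 ^ m * (∏ i : Fin k, (if (i : ℕ) = m then 1 else if (i : ℕ) < m then n i else 2 * n i))
      = 2 ^ (k - 1) * ∏ i : Fin k, (if (i : ℕ) = m then 1 else n i) := by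
  classical
  have hfilterlt : (Finset.univ.filter fun i : Fin k => (i : ℕ) < m).card = m := by
    have : Finset.univ.filter (fun i : Fin k => (i : ℕ) < m) = Finset.Iio (⟨m, hm⟩ : Fin k) := by
      ext i
      simp [Fin.lt_def]
    rw [this, Fin.card_Iio]
  have hfiltereq : (Finset.univ.filter fun i : Fin k => (i : ℕ) = m).card = 1 := by
    have : Finset.univ.filter (fun i : Fin k => (i : ℕ) = m) = {(⟨m, hm⟩ : Fin k)} := by
      ext i
      simp [Fin.ext_iff]
    rw [this, Finset.card_singleton]
  have hfilterne : (Finset.univ.filter fun i : Fin k => ¬ ((i : ℕ) = m)).card = k - 1 := by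
    have h := Finset.card_filter_add_card_filter_not
      (s := (Finset.univ : Finset (Fin k))) (p := fun i : Fin k => (i : ℕ) = m)
    have h2 : (Finset.univ : Finset (Fin k)).card = k := by simp
    omega
  have hpt1 : ∀ i : Fin k,
      (if (i : ℕ) < m then 2 else 1) * (if (i : ℕ) = m then 1 else if (i : ℕ) < m then n i else 2 * n i)
        = (if (i : ℕ) = m then 1 else 2 * n i) := by
    intro i
    by_cases h1 : (i : ℕ) = m
    · have h2 : ¬ ((i : ℕ) < m) := by omega
      simp [h1, h2]
    · by_cases h2 : (i : ℕ) < m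
      · simp [h1, h2]
      · simp [h1, h2]
  have hpt2 : ∀ i : Fin k,
      (if (i : ℕ) = m then 1 else 2) * (if (i : ℕ) = m then 1 else n i)
        = (if (i : ℕ) = m then 1 else 2 * n i) := by
    intro i
    by_cases h1 : (i : ℕ) = m <;> simp [h1]
  have hp1 : (∏ i : Fin k, (if (i : ℕ) < m then 2 else 1)) = 2 ^ m := by
    rw [Finset.prod_ite, Finset.prod_const, Finset.prod_const_one, hfilterlt, mul_one]
  have hp2 : (∏ i : Fin k, (if (i : ℕ) = m then 1 else 2)) = 2 ^ (k - 1) := by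
    rw [Finset.prod_ite, Finset.prod_const, Finset.prod_const, hfilterne, one_pow, one_mul]
  calc 2 ^ m * ∏ i : Fin k, (if (i : ℕ) = m then 1 else if (i : ℕ) < m then n i else 2 * n i)
      = (∏ i : Fin k, (if (i : ℕ) < m then 2 else 1)) *
          ∏ i : Fin k, (if (i : ℕ) = m then 1 else if (i : ℕ) < m then n i else 2 * n i) := by
        rw [hp1]
    _ = ∏ i : Fin k, (if (i : ℕ) = m then 1 else 2 * n i) := by
        rw [← Finset.prod_mul_distrib]
        exact Finset.prod_congr rfl fun i _ => hpt1 i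
    _ = (∏ i : Fin k, (if (i : ℕ) = m then 1 else 2)) * ∏ i : Fin k, (if (i : ℕ) = m then 1 else n i) := by
        rw [← Finset.prod_mul_distrib]
        exact (Finset.prod_congr rfl fun i _ => hpt2 i).symm
    _ = 2 ^ (k - 1) * ∏ i : Fin k, (if (i : ℕ) = m then 1 else n i) := by rw [hp2]

lemma E_prod_min {m : ℕ} (hm : m < k) :
    (∏ i : Fin k, (if (i : ℕ) = m then 1 else n i)) * (⨅ i, n i) ≤ ∏ i, n i := by
  classical
  set mf : Fin k := ⟨m, hm⟩ with hmf
  have h1 : ∏ i : Fin k, (if (i : ℕ) = m then 1 else n i)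
      = ∏ i ∈ Finset.univ.erase mf, n i := by
    rw [← Finset.mul_prod_erase Finset.univ
      (fun i : Fin k => if (i : ℕ) = m then 1 else n i) (Finset.mem_univ mf)]
    have : (if (mf : ℕ) = m then 1 else n mf) = 1 := by simp [hmf]
    rw [this, one_mul]
    refine Finset.prod_congr rfl fun i hi => ?_
    have : (i : ℕ) ≠ m := by
      intro h
      exact (Finset.mem_erase.mp hi).1 (Fin.ext h)
    simp [this]
  have h2 : (⨅ i, n i) ≤ n mf := ciInf_le (OrderBot.bddBelow _) _
  rw [h1]
  calc (∏ i ∈ Finset.univ.erase mf, n i) * (⨅ i, n i)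
      ≤ (∏ i ∈ Finset.univ.erase mf, n i) * n mf := Nat.mul_le_mul_left _ h2
    _ = ∏ i, n i := by
        rw [mul_comm, Finset.mul_prod_erase Finset.univ n (Finset.mem_univ mf)]

end DLCD
/-- For `A' ⊆ B`, `d_k(A') ≤ 2^k |co(A') \ A'| + 2^{k+2} k (k+1) (min nᵢ)⁻¹ |B|`. -/
theorem doubling_le_convex_defect (k : ℕ) (hk : 0 < k) (n : Fin k → ℕ)
    (A' : Finset (Fin k → ℤ))
    (hbox : ∀ a ∈ A', ∀ i, 1 ≤ a i ∧ a i ≤ (n i : ℤ)) :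
    ((A' + A').card : ℝ) - 2 ^ k * A'.card ≤
      2 ^ k * (Set.ncard {x : Fin k → ℤ |
          (fun i => (x i : ℝ)) ∈ convexHull ℝ ((fun (a : Fin k → ℤ) (i : Fin k) => (a i : ℝ)) '' ↑A')
          ∧ x ∉ A'} : ℝ)
        + 2 ^ (k + 2) * k * (k + 1) / ((⨅ i, n i : ℕ) : ℝ) * ∏ i, (n i : ℝ) := by
  classical
  rcases A'.eq_empty_or_nonempty with rfl | ⟨a0, ha0⟩
  · simp only [Finset.add_empty, Finset.card_empty, Nat.cast_zero, mul_zero, sub_zero]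
    have h1 : (0:ℝ) ≤ 2 ^ k * (Set.ncard {x : Fin k → ℤ |
        (fun i => (x i : ℝ)) ∈ convexHull ℝ ((fun (a : Fin k → ℤ) (i : Fin k) => (a i : ℝ)) '' ↑(∅ : Finset (Fin k → ℤ)))
        ∧ x ∉ (∅ : Finset (Fin k → ℤ))} : ℝ) := by positivity
    have h2 : (0:ℝ) ≤ 2 ^ (k + 2) * k * (k + 1) / ((⨅ i, n i : ℕ) : ℝ) * ∏ i, (n i : ℝ) := by
      positivity
    linarith
  set K : Set (Fin k → ℝ) :=
    convexHull ℝ ((fun (a : Fin k → ℤ) (i : Fin k) => (a i : ℝ)) '' ↑A') with hKdef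
  have hKconv : Convex ℝ K := convex_convexHull ℝ _
  have hKbox : ∀ y ∈ K, ∀ i, 1 ≤ y i ∧ y i ≤ (n i : ℝ) := by
    have hsub : (fun (a : Fin k → ℤ) (i : Fin k) => (a i : ℝ)) '' ↑A' ⊆
        Set.pi Set.univ (fun i => Set.Icc (1 : ℝ) (n i)) := by
      rintro _ ⟨a, ha, rfl⟩
      intro i _
      have h := hbox a ha i
      have h1 : (1:ℝ) ≤ ((a i : ℤ) : ℝ) := by exact_mod_cast h.1
      have h2 : ((a i : ℤ) : ℝ) ≤ (n i : ℝ) := by exact_mod_cast h.2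
      exact ⟨h1, h2⟩
    have hconvbox : Convex ℝ (Set.pi Set.univ (fun i : Fin k => Set.Icc (1 : ℝ) (n i))) :=
      convex_pi fun i _ => convex_Icc _ _
    intro y hy i
    have := convexHull_min hsub hconvbox hy i (Set.mem_univ i)
    exact ⟨this.1, this.2⟩
  have hmixk : ∀ x : Fin k → ℤ, DLCD.mixed k x = fun i => (x i : ℝ) := by
    intro x
    funext i
    simp [DLCD.mixed, i.isLt]
  -- A' ⊆ D k
  have hA'Dk : A' ⊆ DLCD.D n K k := by
    intro a ha
    rw [DLCD.mem_D n K hKbox, hmixk]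
    exact subset_convexHull ℝ _ ⟨a, ha, rfl⟩
  -- A' + A' ⊆ D 0
  have hsumD0 : A' + A' ⊆ DLCD.D n K 0 := by
    intro z hz
    rw [Finset.mem_add] at hz
    obtain ⟨a, ha, b, hb, rfl⟩ := hz
    rw [DLCD.mem_D n K hKbox]
    have haK : (fun i => ((a i : ℝ))) ∈ K := subset_convexHull ℝ _ ⟨a, ha, rfl⟩
    have hbK : (fun i => ((b i : ℝ))) ∈ K := subset_convexHull ℝ _ ⟨b, hb, rfl⟩
    have hmid := hKconv haK hbK (by norm_num : (0:ℝ) ≤ 1/2) (by norm_num : (0:ℝ) ≤ 1/2)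
      (by norm_num)
    have : DLCD.mixed 0 (a + b) =
        (1/2 : ℝ) • (fun i => ((a i : ℝ))) + (1/2 : ℝ) • (fun i => ((b i : ℝ))) := by
      funext i
      simp only [DLCD.mixed, Nat.not_lt_zero, if_false, Pi.add_apply, Pi.smul_apply,
        smul_eq_mul]
      push_cast
      ring
    rw [this]
    exact hmid
  -- the convex-defect set is the coercion of a finset
  have hSset : {x : Fin k → ℤ |
      (fun i => (x i : ℝ)) ∈ convexHull ℝ ((fun (a : Fin k → ℤ) (i : Fin k) => (a i : ℝ)) '' ↑A')
      ∧ x ∉ A'} = ↑(DLCD.D n K k \ A') := by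
    ext x
    simp only [Set.mem_setOf_eq, Finset.coe_sdiff, Set.mem_diff, Finset.mem_coe]
    constructor
    · rintro ⟨h1, h2⟩
      refine ⟨?_, h2⟩
      rw [DLCD.mem_D n K hKbox, hmixk]
      exact h1
    · rintro ⟨h1, h2⟩
      refine ⟨?_, h2⟩
      rw [DLCD.mem_D n K hKbox, hmixk] at h1
      exact h1
  have hncard : (Set.ncard {x : Fin k → ℤ |
      (fun i => (x i : ℝ)) ∈ convexHull ℝ ((fun (a : Fin k → ℤ) (i : Fin k) => (a i : ℝ)) '' ↑A')
      ∧ x ∉ A'}) = (DLCD.D n K k \ A').card := by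
    rw [hSset, Set.ncard_coe_finset]
  -- infimum facts
  set N : ℕ := ⨅ i, n i with hN
  have hNpos : 0 < N := by
    have hne : (Set.range n).Nonempty := ⟨n ⟨0, hk⟩, Set.mem_range_self _⟩
    have hmem : sInf (Set.range n) ∈ Set.range n := Nat.sInf_mem hne
    obtain ⟨i0, hi0⟩ := hmem
    have h1 : (1 : ℤ) ≤ n i0 := le_trans (hbox a0 ha0 i0).1 (hbox a0 ha0 i0).2
    have h2 : 1 ≤ n i0 := by exact_mod_cast h1
    have h3 : N = n i0 := by rw [hN]; exact hi0.symm
    exact h3 ▸ h2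
  -- error term in ℕ
  set ErrN : ℕ := ∑ m ∈ Finset.range k,
      2 ^ m * ∏ i : Fin k, (if (i : ℕ) = m then 1 else if (i : ℕ) < m then n i else 2 * n i)
    with hErrN
  have hErrbound : ErrN * N ≤ k * (2 ^ (k - 1) * ∏ i, n i) := by
    rw [hErrN, Finset.sum_mul]
    calc ∑ m ∈ Finset.range k,
          (2 ^ m * ∏ i : Fin k, (if (i : ℕ) = m then 1 else if (i : ℕ) < m then n i else 2 * n i)) * N
        ≤ ∑ _m ∈ Finset.range k, 2 ^ (k - 1) * ∏ i, n i := by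
          apply Finset.sum_le_sum
          intro m hm
          have hmk : m < k := Finset.mem_range.mp hm
          rw [DLCD.twopow_E n hmk, mul_assoc]
          exact Nat.mul_le_mul_left _ (DLCD.E_prod_min n hmk)
      _ = k * (2 ^ (k - 1) * ∏ i, n i) := by
          rw [Finset.sum_const, Finset.card_range, smul_eq_mul]
  -- main counting chain in ℕ
  have hchainN : (A' + A').card ≤ 2 ^ k * A'.card + 2 ^ k * (DLCD.D n K k \ A').card + ErrN := by
    have h1 : (A' + A').card ≤ (DLCD.D n K 0).card := Finset.card_le_card hsumD0
    have h2 := DLCD.unroll n K hKbox hKconv k le_rfl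
    have h3 : (DLCD.D n K k \ A').card + A'.card = (DLCD.D n K k).card :=
      Finset.card_sdiff_add_card_eq_card hA'Dk
    calc (A' + A').card ≤ (DLCD.D n K 0).card := h1
      _ ≤ 2 ^ k * (DLCD.D n K k).card + ErrN := h2
      _ = 2 ^ k * A'.card + 2 ^ k * (DLCD.D n K k \ A').card + ErrN := by
          rw [← h3]
          ring
  -- pass to ℝ
  have hNR : (0:ℝ) < (N : ℝ) := by exact_mod_cast hNpos
  have hErrR : (ErrN : ℝ) ≤ (k : ℝ) * 2 ^ (k - 1) * (∏ i, (n i : ℝ)) / (N : ℝ) := by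
    rw [le_div_iff₀ hNR]
    have : ((ErrN * N : ℕ) : ℝ) ≤ ((k * (2 ^ (k - 1) * ∏ i, n i) : ℕ) : ℝ) := by
      exact_mod_cast hErrbound
    push_cast at this
    linarith [this]
  have hfinal : (k : ℝ) * 2 ^ (k - 1) * (∏ i, (n i : ℝ)) / (N : ℝ)
      ≤ 2 ^ (k + 2) * k * (k + 1) / (N : ℝ) * ∏ i, (n i : ℝ) := by
    rw [div_mul_eq_mul_div]
    have hnum : (k : ℝ) * 2 ^ (k - 1) * (∏ i, (n i : ℝ)) ≤
        2 ^ (k + 2) * k * (k + 1) * ∏ i, (n i : ℝ) := by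
      have hpow : (2:ℝ) ^ (k - 1) ≤ 2 ^ (k + 2) := by
        apply pow_le_pow_right₀ (by norm_num)
        exact le_trans (Nat.sub_le k 1) (Nat.le_add_right k 2)
      have hprod : (0:ℝ) ≤ ∏ i, (n i : ℝ) := by positivity
      have hkR : (0:ℝ) ≤ (k : ℝ) := Nat.cast_nonneg k
      calc (k : ℝ) * 2 ^ (k - 1) * (∏ i, (n i : ℝ))
          ≤ (k : ℝ) * 2 ^ (k + 2) * (∏ i, (n i : ℝ)) := by gcongr
        _ = 2 ^ (k + 2) * (k : ℝ) * 1 * (∏ i, (n i : ℝ)) := by ring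
        _ ≤ 2 ^ (k + 2) * (k : ℝ) * ((k : ℝ) + 1) * (∏ i, (n i : ℝ)) := by
            gcongr
            linarith
    gcongr
  rw [hncard]
  have hcast : ((A' + A').card : ℝ) ≤ 2 ^ k * A'.card + 2 ^ k * ((DLCD.D n K k \ A').card : ℝ)
      + (ErrN : ℝ) := by
    exact_mod_cast hchainN
  have hNcastprod : ((∏ i, n i : ℕ) : ℝ) = ∏ i, (n i : ℝ) := by push_cast; rfl
  linarith [hErrR, hfinal, hcast]
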